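/- Define ws-trees over a world-table inductively: a leaf ∅ represents the set of all worlds; a leaf ⊥ represents the empty world-set; an ⊕-node for variable x with children (i, R_i) for i ranging over a subset I ⊆ Dom_x represents ⋃_{i∈I} (A_{x=i} ∩ ω(R_i)), where no R_i mentions x; an ⊗-node with children R_1,…,R_k whose variable sets are pairwise disjoint represents ⋃_j ω(R_j). Define P(∅)=1, P(⊥)=0, P(⊗(R_1,…,R_k)) = 1 − ∏_j (1 − P(R_j)), and P(⊕_{i∈I}(x↦i : R_i)) = Σ_{i∈I} P_x(i)·P(R_i). Then for every ws-tree R, P(R) equals the probability under the product measure of the world-set ω(R) represented by R. -/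

import Mathlib

/-- World-set trees: leaves `top` (all worlds) and `bot` (no worlds),
⊕-nodes with one child per assignment `x ↦ i` for `i ∈ I`, and
⊗-nodes with finitely many children. -/
inductive WSTree (V α : Type) where
  | top : WSTree V α
  | bot : WSTree V α
  | oplus (x : V) (I : Finset α) (c : α → WSTree V α) : WSTree V α
  | otimes (n : ℕ) (c : Fin n → WSTree V α) : WSTree V α

/-- The world-set represented by a ws-tree. -/
def WSTree.omega {V α : Type} : WSTree V α → Set (V → α)
  | .top => Set.univ
  | .bot => ∅
  | .oplus x I c => ⋃ i ∈ I, ({f : V → α | f x = i} ∩ (c i).omega)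
  | .otimes _ c => ⋃ j, (c j).omega

/-- The variables mentioned by a ws-tree. -/
def WSTree.vars {V α : Type} : WSTree V α → Set V
  | .top => ∅
  | .bot => ∅
  | .oplus x I c => {x} ∪ ⋃ i ∈ I, (c i).vars
  | .otimes _ c => ⋃ j, (c j).vars

/-- The probability computation `P` on ws-trees. -/
noncomputable def WSTree.prob {V α : Type} [Fintype α] (p : V → α → ℝ) :
    WSTree V α → ℝ
  | .top => 1
  | .bot => 0
  | .oplus x I c => ∑ i ∈ I, p x i * (c i).prob p
  | .otimes _ c => 1 - ∏ j, (1 - (c j).prob p)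

/-- Structural constraints on ws-trees: children of an ⊕-node on `x` do not
mention `x`, and the children of an ⊗-node use pairwise disjoint variables. -/
inductive WSTree.WF {V α : Type} : WSTree V α → Prop
  | top : WF .top
  | bot : WF .bot
  | oplus (x : V) (I : Finset α) (c : α → WSTree V α) :
      (∀ i ∈ I, WF (c i)) → (∀ i ∈ I, x ∉ (c i).vars) → WF (.oplus x I c)
  | otimes (n : ℕ) (c : Fin n → WSTree V α) :
      (∀ j, WF (c j)) → (∀ j k, j ≠ k → Disjoint (c j).vars (c k).vars) →
      WF (.otimes n c)

open Classical in
noncomputable def Pr {V α : Type} [Fintype V] [DecidableEq V] [Fintype α]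
    (p : V → α → ℝ) (S : Set (V → α)) : ℝ :=
  ∑ f ∈ Finset.univ.filter (fun f => f ∈ S), ∏ x, p x (f x)

section Aux

set_option linter.unusedSectionVars false

variable {V α : Type} [Fintype V] [DecidableEq V] [Fintype α]

/-- `S` depends only on the variables in `W`. -/
def WDependsOn (S : Set (V → α)) (W : Set V) : Prop :=
  ∀ f g : V → α, (∀ x ∈ W, f x = g x) → f ∈ S → g ∈ S

lemma WDependsOn.mono {S : Set (V → α)} {W W' : Set V} (h : WDependsOn S W)
    (hW : W ⊆ W') : WDependsOn S W' :=
  fun f g hfg => h f g (fun x hx => hfg x (hW hx))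

lemma WDependsOn.compl {S : Set (V → α)} {W : Set V} (h : WDependsOn S W) :
    WDependsOn Sᶜ W :=
  fun f g hfg hf hg => hf (h g f (fun x hx => (hfg x hx).symm) hg)

lemma WDependsOn.iInter {n : ℕ} {T : Fin n → Set (V → α)} {W : Fin n → Set V}
    (h : ∀ j, WDependsOn (T j) (W j)) :
    WDependsOn (⋂ j, T j) (⋃ j, W j) := by
  intro f g hfg hf
  simp only [Set.mem_iInter] at hf ⊢
  intro j
  exact h j f g (fun x hx => hfg x (Set.mem_iUnion.2 ⟨j, hx⟩)) (hf j)

lemma omega_dependsOn (R : WSTree V α) : WDependsOn R.omega R.vars := by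
  induction R with
  | top => intro f g _ _; trivial
  | bot => intro f g _ hf; exact hf.elim
  | oplus x I c ih =>
    intro f g hfg hf
    simp only [WSTree.omega, Set.mem_iUnion, Set.mem_inter_iff, Set.mem_setOf_eq] at hf ⊢
    obtain ⟨i, hi, hfx, hfc⟩ := hf
    have hx : g x = i := by
      rw [← hfg x (by simp [WSTree.vars])]; exact hfx
    refine ⟨i, hi, hx, ?_⟩
    refine ih i f g (fun y hy => hfg y ?_) hfc
    simp only [WSTree.vars, Set.mem_union, Set.mem_iUnion]
    exact Or.inr ⟨i, hi, hy⟩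
  | otimes n c ih =>
    intro f g hfg hf
    simp only [WSTree.omega, Set.mem_iUnion] at hf ⊢
    obtain ⟨j, hj⟩ := hf
    refine ⟨j, ih j f g (fun y hy => hfg y ?_) hj⟩
    simp only [WSTree.vars, Set.mem_iUnion]
    exact ⟨j, hy⟩

open Classical in
lemma Pr_eq_sum (p : V → α → ℝ) (S : Set (V → α)) :
    Pr p S = ∑ f : V → α, if f ∈ S then ∏ x, p x (f x) else 0 := by
  rw [Pr, Finset.sum_filter]

lemma sum_weights {ι : Type*} [Fintype ι] [DecidableEq ι]
    (q : ι → α → ℝ) (h : ∀ x, ∑ a, q x a = 1) :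
    ∑ f : ι → α, ∏ x, q x (f x) = 1 := by
  classical
  have key := Finset.prod_univ_sum (fun _ : ι => (Finset.univ : Finset α)) q
  rw [Fintype.piFinset_univ] at key
  rw [← key]
  simp [h]

lemma Pr_empty (p : V → α → ℝ) : Pr p (∅ : Set (V → α)) = 0 := by
  rw [Pr_eq_sum]; simp

lemma Pr_univ (p : V → α → ℝ) (hp1 : ∀ x, ∑ a, p x a = 1) :
    Pr p (Set.univ : Set (V → α)) = 1 := by
  rw [Pr_eq_sum]; simpa using sum_weights p hp1

lemma Pr_add_compl (p : V → α → ℝ) (hp1 : ∀ x, ∑ a, p x a = 1) (S : Set (V → α)) :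
    Pr p S + Pr p Sᶜ = 1 := by
  classical
  rw [Pr_eq_sum, Pr_eq_sum, ← Finset.sum_add_distrib]
  rw [show (1 : ℝ) = ∑ f : V → α, ∏ x, p x (f x) from (sum_weights p hp1).symm]
  refine Finset.sum_congr rfl fun f _ => ?_
  by_cases hf : f ∈ S <;> simp [hf]

lemma Pr_compl (p : V → α → ℝ) (hp1 : ∀ x, ∑ a, p x a = 1) (S : Set (V → α)) :
    Pr p Sᶜ = 1 - Pr p S := by
  have := Pr_add_compl p hp1 S; linarith

lemma Pr_union_disjoint (p : V → α → ℝ) {S T : Set (V → α)} (h : Disjoint S T) :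
    Pr p (S ∪ T) = Pr p S + Pr p T := by
  classical
  rw [Pr_eq_sum, Pr_eq_sum, Pr_eq_sum, ← Finset.sum_add_distrib]
  refine Finset.sum_congr rfl fun f _ => ?_
  by_cases hS : f ∈ S
  · have hT : f ∉ T := Set.disjoint_left.1 h hS
    simp [hS, hT]
  · by_cases hT : f ∈ T <;> simp [hS, hT]

lemma Pr_biUnion (p : V → α → ℝ) {β : Type} [DecidableEq β] (I : Finset β)
    (U : β → Set (V → α))
    (h : ∀ i ∈ I, ∀ j ∈ I, i ≠ j → Disjoint (U i) (U j)) :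
    Pr p (⋃ i ∈ I, U i) = ∑ i ∈ I, Pr p (U i) := by
  classical
  induction I using Finset.induction_on with
  | empty => simp [Pr_empty]
  | insert a s ha ih =>
    rw [Finset.set_biUnion_insert, Pr_union_disjoint, Finset.sum_insert ha,
      ih (fun i hi j hj hij => h i (Finset.mem_insert_of_mem hi) j
        (Finset.mem_insert_of_mem hj) hij)]
    rw [Set.disjoint_iUnion₂_right]
    intro i hi
    exact h a (Finset.mem_insert_self a s) i (Finset.mem_insert_of_mem hi)
      (fun hai => ha (hai ▸ hi))

lemma Pr_single (p : V → α → ℝ) (hp1 : ∀ x, ∑ a, p x a = 1) (x : V) (i : α) :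
    Pr p {f : V → α | f x = i} = p x i := by
  classical
  rw [Pr_eq_sum]
  set q : V → α → ℝ := fun y a => if y = x then (if a = i then p y a else 0) else p y a
    with hq
  have key : ∀ f : V → α,
      (if f ∈ {f : V → α | f x = i} then ∏ y, p y (f y) else 0) = ∏ y, q y (f y) := by
    intro f
    by_cases hf : f x = i
    · simp only [Set.mem_setOf_eq, hf, if_pos]
      refine Finset.prod_congr rfl fun y _ => ?_
      by_cases hy : y = x
      · subst hy; simp [hq, hf]
      · simp [hq, hy]
    · simp only [Set.mem_setOf_eq, hf, if_neg, if_false]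
      refine (Finset.prod_eq_zero (Finset.mem_univ x) ?_).symm
      simp [hq, hf]
  rw [Finset.sum_congr rfl fun f _ => key f]
  have key2 := Finset.prod_univ_sum (fun _ : V => (Finset.univ : Finset α)) q
  rw [Fintype.piFinset_univ] at key2
  rw [← key2]
  have hqy : ∀ y : V, ∑ a, q y a = if y = x then p x i else 1 := by
    intro y
    by_cases hy : y = x
    · subst hy; simp [hq, Finset.sum_ite_eq' Finset.univ i (p y)]
    · simp [hq, hy, hp1 y]
  rw [Finset.prod_congr rfl fun y _ => hqy y]
  simp

lemma Pr_inter_indep (p : V → α → ℝ) (hp1 : ∀ x, ∑ a, p x a = 1) (A : Set V)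
    {S T : Set (V → α)} (hS : WDependsOn S A) (hT : WDependsOn T Aᶜ) :
    Pr p (S ∩ T) = Pr p S * Pr p T := by
  classical
  set e := Equiv.piEquivPiSubtypeProd (fun x : V => x ∈ A) (fun _ : V => α) with he
  set wA : ({x : V // x ∈ A} → α) → ℝ := fun g => ∏ x, p x.1 (g x) with hwA
  set wB : ({x : V // ¬ x ∈ A} → α) → ℝ := fun h => ∏ x, p x.1 (h x) with hwB
  have hsymm : ∀ (g : {x : V // x ∈ A} → α) (h : {x : V // ¬ x ∈ A} → α) (x : V),
      e.symm (g, h) x = if hx : x ∈ A then g ⟨x, hx⟩ else h ⟨x, hx⟩ := by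
    intro g h x; rw [he]; simp [Equiv.piEquivPiSubtypeProd]
  have hw : ∀ g h, (∏ x, p x (e.symm (g, h) x)) = wA g * wB h := by
    intro g h
    rw [← Fintype.prod_subtype_mul_prod_subtype (fun x : V => x ∈ A)
      (fun x => p x (e.symm (g, h) x))]
    congr 1
    · exact Finset.prod_congr rfl fun x _ => by rw [hsymm, dif_pos x.2]
    · exact Finset.prod_congr rfl fun x _ => by rw [hsymm, dif_neg x.2]
  have memS : ∀ g h, (e.symm (g, h) ∈ S ↔ ∃ h', e.symm (g, h') ∈ S) := by
    intro g h
    constructor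
    · exact fun hh => ⟨h, hh⟩
    · rintro ⟨h', hh'⟩
      refine hS _ _ (fun x hx => ?_) hh'
      rw [hsymm, hsymm, dif_pos hx, dif_pos hx]
  have memT : ∀ g h, (e.symm (g, h) ∈ T ↔ ∃ g', e.symm (g', h) ∈ T) := by
    intro g h
    constructor
    · exact fun hh => ⟨g, hh⟩
    · rintro ⟨g', hg'⟩
      refine hT _ _ (fun x hx => ?_) hg'
      rw [hsymm, hsymm, dif_neg hx, dif_neg hx]
  have sumA : ∑ g, wA g = 1 := sum_weights _ (fun x => hp1 x.1)
  have sumB : ∑ h, wB h = 1 := sum_weights _ (fun x => hp1 x.1)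
  have expand : ∀ U : Set (V → α),
      Pr p U = ∑ g, ∑ h, if e.symm (g, h) ∈ U then wA g * wB h else 0 := by
    intro U
    rw [Pr_eq_sum, ← Equiv.sum_comp e.symm
      (fun f => if f ∈ U then ∏ x, p x (f x) else 0), Fintype.sum_prod_type]
    exact Finset.sum_congr rfl fun g _ => Finset.sum_congr rfl fun h _ => by rw [hw]
  have hPrS : Pr p S = ∑ g, if (∃ h', e.symm (g, h') ∈ S) then wA g else 0 := by
    rw [expand S]
    refine Finset.sum_congr rfl fun g _ => ?_
    rw [show (∑ h, if e.symm (g, h) ∈ S then wA g * wB h else 0)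
        = ∑ h, (if (∃ h', e.symm (g, h') ∈ S) then wA g else 0) * wB h from
      Finset.sum_congr rfl fun h _ => by
        by_cases hh : e.symm (g, h) ∈ S
        · rw [if_pos hh, if_pos ((memS g h).1 hh)]
        · rw [if_neg hh, if_neg (fun hex => hh ((memS g h).2 hex)), zero_mul]]
    rw [← Finset.mul_sum, sumB, mul_one]
  have hPrT : Pr p T = ∑ h, if (∃ g', e.symm (g', h) ∈ T) then wB h else 0 := by
    rw [expand T, Finset.sum_comm]
    refine Finset.sum_congr rfl fun h _ => ?_
    rw [show (∑ g, if e.symm (g, h) ∈ T then wA g * wB h else 0)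
        = ∑ g, wA g * (if (∃ g', e.symm (g', h) ∈ T) then wB h else 0) from
      Finset.sum_congr rfl fun g _ => by
        by_cases hh : e.symm (g, h) ∈ T
        · rw [if_pos hh, if_pos ((memT g h).1 hh)]
        · rw [if_neg hh, if_neg (fun hex => hh ((memT g h).2 hex)), mul_zero]]
    rw [← Finset.sum_mul, sumA, one_mul]
  rw [expand (S ∩ T), hPrS, hPrT, Finset.sum_mul_sum]
  refine Finset.sum_congr rfl fun g _ => Finset.sum_congr rfl fun h _ => ?_
  by_cases hgS : e.symm (g, h) ∈ S <;> by_cases hhT : e.symm (g, h) ∈ T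
  · rw [if_pos ⟨hgS, hhT⟩, if_pos ((memS g h).1 hgS), if_pos ((memT g h).1 hhT)]
  · rw [if_neg (fun hc => hhT hc.2), if_neg (fun hex => hhT ((memT g h).2 hex)), mul_zero]
  · rw [if_neg (fun hc => hgS hc.1), if_neg (fun hex => hgS ((memS g h).2 hex)), zero_mul]
  · rw [if_neg (fun hc => hgS hc.1), if_neg (fun hex => hgS ((memS g h).2 hex)), zero_mul]

lemma Pr_iInter_indep (p : V → α → ℝ) (hp1 : ∀ x, ∑ a, p x a = 1) :
    ∀ (n : ℕ) (T : Fin n → Set (V → α)) (W : Fin n → Set V),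
    (∀ j, WDependsOn (T j) (W j)) →
    (∀ j k, j ≠ k → Disjoint (W j) (W k)) →
    Pr p (⋂ j, T j) = ∏ j, Pr p (T j) := by
  intro n
  induction n with
  | zero =>
    intro T W _ _
    simp [Set.iInter_of_empty, Pr_univ p hp1]
  | succ n ih =>
    intro T W hdep hdisj
    have hsplit : (⋂ j, T j) = T 0 ∩ ⋂ j : Fin n, T j.succ := by
      ext f
      simp only [Set.mem_iInter, Set.mem_inter_iff]
      constructor
      · exact fun h => ⟨h 0, fun j => h j.succ⟩
      · rintro ⟨h0, hs⟩ j
        rcases Fin.eq_zero_or_eq_succ j with h | ⟨k, rfl⟩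
        · exact h ▸ h0
        · exact hs k
    have htail : WDependsOn (⋂ j : Fin n, T j.succ) (W 0)ᶜ := by
      refine (WDependsOn.iInter (fun j => hdep j.succ)).mono ?_
      intro x hx
      simp only [Set.mem_iUnion] at hx
      obtain ⟨j, hj⟩ := hx
      exact fun hx0 => Set.disjoint_left.1 (hdisj j.succ 0 (Fin.succ_ne_zero j)) hj hx0
    rw [hsplit, Pr_inter_indep p hp1 (W 0) (hdep 0) htail,
      ih (fun j => T j.succ) (fun j => W j.succ) (fun j => hdep j.succ)
        (fun j k hjk => hdisj j.succ k.succ (fun h => hjk (Fin.succ_injective n h))),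
      Fin.prod_univ_succ]

end Aux

/-- `P(R)` equals the probability of the world-set represented by `R`. -/
theorem stmt11 {V α : Type} [Fintype V] [DecidableEq V] [Fintype α]
    (p : V → α → ℝ) (hp0 : ∀ x a, 0 ≤ p x a) (hp1 : ∀ x, ∑ a, p x a = 1)
    (R : WSTree V α) (hR : R.WF) :
    R.prob p = Pr p R.omega := by
  classical
  induction hR with
  | top => rw [WSTree.prob, WSTree.omega, Pr_univ p hp1]
  | bot => rw [WSTree.prob, WSTree.omega, Pr_empty p]
  | oplus x I c hWF hx ih =>
    rw [WSTree.prob, WSTree.omega, Pr_biUnion p I _ ?_]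
    · refine Finset.sum_congr rfl fun i hi => ?_
      have hSdep : WDependsOn (c i).omega ({x} : Set V)ᶜ := by
        refine (omega_dependsOn (c i)).mono ?_
        intro y hy hyx
        exact hx i hi (by simpa using (show y = x from hyx) ▸ hy)
      have hTdep : WDependsOn ({f : V → α | f x = i}) (({x} : Set V)ᶜ)ᶜ := by
        rw [compl_compl]
        intro f g hfg hf
        simp only [Set.mem_setOf_eq] at hf ⊢
        rw [← hfg x (by simp)]; exact hf
      rw [Set.inter_comm, Pr_inter_indep p hp1 (({x} : Set V)ᶜ) hSdep hTdep,
        Pr_single p hp1 x i, ih i hi, mul_comm]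
    · intro i hi j hj hij
      rw [Set.disjoint_left]
      rintro f ⟨hfi, -⟩ ⟨hfj, -⟩
      exact hij (hfi.symm.trans hfj)
  | otimes n c hWF hdisj ih =>
    rw [WSTree.prob, WSTree.omega]
    have h1 : Pr p (⋂ j, ((c j).omega)ᶜ) = ∏ j, Pr p (((c j).omega)ᶜ) :=
      Pr_iInter_indep p hp1 n _ (fun j => (c j).vars)
        (fun j => (omega_dependsOn (c j)).compl) hdisj
    have h2 : (⋂ j, ((c j).omega)ᶜ) = (⋃ j, (c j).omega)ᶜ := by
      rw [Set.compl_iUnion]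
    have h3 := Pr_compl p hp1 (⋃ j, (c j).omega)
    rw [h2, h3] at h1
    have h4 : ∀ j, Pr p (((c j).omega)ᶜ) = 1 - (c j).prob p := by
      intro j
      rw [Pr_compl p hp1, ih j]
    rw [Finset.prod_congr rfl fun j _ => h4 j] at h1
    linarith
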